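/- arXiv:2007.14458 — 9 statements merged into one kernel-verified Lean document; each statement's English description precedes it below -/
import Mathlib

section
/- Let c0 ∈ (-1,1) and c5 ∈ (0,∞) with c5 ≠ 1. Define f0 = (c5(2-c0)+c0 - √(c0²(c5-1)² + 4c5)) / (2(c5-1)) and f1 = f0 + c0. Then 0 ≤ f0 ≤ 1, 0 ≤ f1 ≤ 1, and f0·f1 / ((1-f0)(1-f1)) = c5 whenever 0 < f0 < 1 and 0 < f1 < 1. -/
set_option maxHeartbeats 2000000 in
/-- Additive LATE parameterization: with risk difference `c0` and odds product `c5`,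
`f0` and `f1 = f0 + c0` are probabilities and their odds product is `c5`. -/
theorem stmt_2 (c0 c5 : ℝ) (hc0 : c0 ∈ Set.Ioo (-1 : ℝ) 1) (hc5 : 0 < c5) (hne : c5 ≠ 1)
    (f0 f1 : ℝ)
    (hf0 : f0 = (c5 * (2 - c0) + c0 - Real.sqrt (c0 ^ 2 * (c5 - 1) ^ 2 + 4 * c5)) /
      (2 * (c5 - 1)))
    (hf1 : f1 = f0 + c0) :
    0 ≤ f0 ∧ f0 ≤ 1 ∧ 0 ≤ f1 ∧ f1 ≤ 1 ∧
    (0 < f0 → f0 < 1 → 0 < f1 → f1 < 1 →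
      f0 * f1 / ((1 - f0) * (1 - f1)) = c5) := by
  obtain ⟨h1, h2⟩ := hc0
  set s := Real.sqrt (c0 ^ 2 * (c5 - 1) ^ 2 + 4 * c5) with hsdef
  have harg : (0:ℝ) ≤ c0 ^ 2 * (c5 - 1) ^ 2 + 4 * c5 := by positivity
  have hs0 : 0 ≤ s := Real.sqrt_nonneg _
  have hs2 : s ^ 2 = c0 ^ 2 * (c5 - 1) ^ 2 + 4 * c5 := Real.sq_sqrt harg
  have hd : c5 - 1 ≠ 0 := sub_ne_zero.mpr hne
  have hF : 2 * (c5 - 1) * f0 = c5 * (2 - c0) + c0 - s := by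
    rw [hf0]; field_simp
  have hQ : (c5 - 1) * f0 ^ 2 - (c5 * (2 - c0) + c0) * f0 + c5 * (1 - c0) = 0 := by
    have key : (2 * (c5 - 1) * f0 - (c5 * (2 - c0) + c0)) ^ 2
        = c0 ^ 2 * (c5 - 1) ^ 2 + 4 * c5 := by
      rw [hF, ← hs2]; ring
    have h4 : 4 * (c5 - 1) * ((c5 - 1) * f0 ^ 2 - (c5 * (2 - c0) + c0) * f0 + c5 * (1 - c0))
        = 0 := by linear_combination key
    rcases mul_eq_zero.mp h4 with h | h
    · exact absurd (by linarith : c5 - 1 = 0) hd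
    · exact h
  have hbounds : 0 ≤ f0 ∧ f0 ≤ 1 ∧ 0 ≤ f1 ∧ f1 ≤ 1 := by
    rcases lt_or_gt_of_ne hne with h | h
    · -- c5 < 1
      have hdlt : c5 - 1 < 0 := by linarith
      -- f0 ≥ 0 :  B ≤ s
      have e1 : c5 * (2 - c0) + c0 ≤ s := by
        nlinarith [hs2, hs0, mul_pos (mul_pos (show (0:ℝ) < 1 - c5 by linarith) hc5)
          (show (0:ℝ) < 1 - c0 by linarith)]
      have hf0nn : 0 ≤ f0 := by
        nlinarith [hF, e1, (show (0:ℝ) < 1 - c5 by linarith)]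
      -- f0 ≤ 1 :  s ≤ 2 - c0*(c5-1)
      have e2 : s ≤ 2 - c0 * (c5 - 1) := by
        nlinarith [hs2, hs0, mul_pos (show (0:ℝ) < 1 - c5 by linarith)
          (show (0:ℝ) < 1 + c0 by linarith),
          mul_pos (show (0:ℝ) < 1 - c5 by linarith) (show (0:ℝ) < 1 - c0 by linarith)]
      have hf0le : f0 ≤ 1 := by
        nlinarith [hF, e2, (show (0:ℝ) < 1 - c5 by linarith)]
      -- f1 ≥ 0 :  2*c5 + c0*(c5-1) ≤ s
      have e3 : 2 * c5 + c0 * (c5 - 1) ≤ s := by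
        nlinarith [hs2, hs0, mul_pos (mul_pos hc5 (show (0:ℝ) < 1 - c5 by linarith))
          (show (0:ℝ) < 1 + c0 by linarith)]
      have hf1nn : 0 ≤ f1 := by
        rw [hf1]; nlinarith [hF, e3, (show (0:ℝ) < 1 - c5 by linarith)]
      -- f1 ≤ 1 :  s ≤ 2 + c0*(c5-1)
      have hT : (0:ℝ) ≤ 2 + c0 * (c5 - 1) := by
        nlinarith [mul_pos (show (0:ℝ) < 1 - c5 by linarith)
          (show (0:ℝ) < 1 + c0 by linarith)]
      have e4 : s ≤ 2 + c0 * (c5 - 1) := by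
        rw [hsdef, show (2 + c0 * (c5 - 1)) = Real.sqrt ((2 + c0 * (c5 - 1)) ^ 2) from
          (Real.sqrt_sq hT).symm]
        apply Real.sqrt_le_sqrt
        nlinarith [mul_pos (show (0:ℝ) < 1 - c5 by linarith)
          (show (0:ℝ) < 1 - c0 by linarith)]
      have hf1le : f1 ≤ 1 := by
        rw [hf1]; nlinarith [hF, e4, (show (0:ℝ) < 1 - c5 by linarith)]
      exact ⟨hf0nn, hf0le, hf1nn, hf1le⟩
    · -- c5 > 1
      have hdgt : (0:ℝ) < c5 - 1 := by linarith
      -- f0 ≥ 0 : s ≤ B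
      have e1 : s ≤ c5 * (2 - c0) + c0 := by
        nlinarith [hs2, hs0, mul_pos (mul_pos hdgt hc5) (show (0:ℝ) < 1 - c0 by linarith),
          mul_pos hdgt (show (0:ℝ) < 1 - c0 by linarith)]
      have hf0nn : 0 ≤ f0 := by
        nlinarith [hF, e1, hdgt]
      -- f0 ≤ 1 : 2 - c0*(c5-1) ≤ s
      have e2 : 2 - c0 * (c5 - 1) ≤ s := by
        nlinarith [hs2, hs0, mul_pos hdgt (show (0:ℝ) < 1 + c0 by linarith)]
      have hf0le : f0 ≤ 1 := by
        nlinarith [hF, e2, hdgt]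
      -- f1 ≥ 0 : s ≤ 2*c5 + c0*(c5-1)
      have e3 : s ≤ 2 * c5 + c0 * (c5 - 1) := by
        nlinarith [hs2, hs0, mul_pos (mul_pos hc5 hdgt) (show (0:ℝ) < 1 + c0 by linarith),
          mul_pos hdgt (show (0:ℝ) < 1 + c0 by linarith)]
      have hf1nn : 0 ≤ f1 := by
        rw [hf1]; nlinarith [hF, e3, hdgt]
      -- f1 ≤ 1 : 2 + c0*(c5-1) ≤ s
      have e4 : 2 + c0 * (c5 - 1) ≤ s := by
        nlinarith [hs2, hs0, mul_pos hdgt (show (0:ℝ) < 1 - c0 by linarith)]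
      have hf1le : f1 ≤ 1 := by
        rw [hf1]; nlinarith [hF, e4, hdgt]
      exact ⟨hf0nn, hf0le, hf1nn, hf1le⟩
  obtain ⟨a, b, c, d⟩ := hbounds
  refine ⟨a, b, c, d, ?_⟩
  intro h01 h02 h11 h12
  have hEq : f0 * f1 = c5 * ((1 - f0) * (1 - f1)) := by
    rw [hf1] at *
    linear_combination -hQ
  rw [hEq]
  have hne1 : (1 - f0) * (1 - f1) ≠ 0 :=
    mul_ne_zero (by intro hh; linarith [sub_eq_zero.mp hh] : (1 - f0) ≠ 0)
      (by intro hh; linarith [sub_eq_zero.mp hh] : (1 - f1) ≠ 0)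
  rw [mul_div_assoc, div_self hne1, mul_one]
end

section
/- Let c0 ∈ (0,∞) and c5 ∈ (0,∞) with c5 ≠ 1. Define f0 = (-(c0+1)c5 + √(c5²(c0-1)² + 4c0c5)) / (2c0(1-c5)) and f1 = c0·f0. If 0 < f0 < 1 and 0 < f1 < 1, then f0·f1 / ((1-f0)(1-f1)) = c5 and f1/f0 = c0. -/
/-- Multiplicative LATE parameterization: with relative risk `c0` and odds product `c5`,
`f0` as in closed form and `f1 = c0 f0` satisfy the odds product and relative risk
identities. -/
theorem stmt_3 (c0 c5 : ℝ) (hc0 : 0 < c0) (hc5 : 0 < c5) (hne : c5 ≠ 1)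
    (f0 f1 : ℝ)
    (hf0 : f0 = (-(c0 + 1) * c5 + Real.sqrt (c5 ^ 2 * (c0 - 1) ^ 2 + 4 * c0 * c5)) /
      (2 * c0 * (1 - c5)))
    (hf1 : f1 = c0 * f0)
    (h0 : 0 < f0) (h0' : f0 < 1) (h1 : 0 < f1) (h1' : f1 < 1) :
    f0 * f1 / ((1 - f0) * (1 - f1)) = c5 ∧ f1 / f0 = c0 := by
  have hne' : (1 : ℝ) - c5 ≠ 0 := sub_ne_zero.mpr (Ne.symm hne)
  have hs : Real.sqrt (c5 ^ 2 * (c0 - 1) ^ 2 + 4 * c0 * c5) ^ 2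
      = c5 ^ 2 * (c0 - 1) ^ 2 + 4 * c0 * c5 := Real.sq_sqrt (by positivity)
  have hlin : f0 * (2 * c0 * (1 - c5)) =
      -(c0 + 1) * c5 + Real.sqrt (c5 ^ 2 * (c0 - 1) ^ 2 + 4 * c0 * c5) := by
    rw [hf0]; field_simp
  have hsq : (f0 * (2 * c0 * (1 - c5)) + (c0 + 1) * c5) ^ 2
      = c5 ^ 2 * (c0 - 1) ^ 2 + 4 * c0 * c5 := by
    rw [show f0 * (2 * c0 * (1 - c5)) + (c0 + 1) * c5
        = Real.sqrt (c5 ^ 2 * (c0 - 1) ^ 2 + 4 * c0 * c5) by linarith]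
    exact hs
  have h4 : (4 * c0 * (1 - c5)) ≠ 0 := by positivity
  have key : (4 * c0 * (1 - c5)) * (c0 * (1 - c5) * f0 ^ 2 + (c0 + 1) * c5 * f0 - c5) = 0 := by
    linear_combination hsq
  have hq : c0 * (1 - c5) * f0 ^ 2 + (c0 + 1) * c5 * f0 - c5 = 0 :=
    (mul_eq_zero.mp key).resolve_left h4
  constructor
  · rw [hf1]
    have h1f0 : (1 : ℝ) - f0 ≠ 0 := ne_of_gt (by linarith)
    have h1f1 : (1 : ℝ) - c0 * f0 ≠ 0 := by
      rw [hf1] at h1'; exact ne_of_gt (by linarith)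
    rw [div_eq_iff (mul_ne_zero h1f0 h1f1)]
    linear_combination hq
  · rw [hf1]; field_simp
end

section
/- Let c1, c2, c3, c4 ∈ [0,1] and let f0, f1 ∈ [0,1]. Define p(0,1|1) = (1-c1)(1-c2)c3, p(0,0|1) = (1-c1)(1-c2)(1-c3), p(1,1|0) = (1-c1)c2c4, p(1,0|0) = (1-c1)c2(1-c4), p(1,1|1) = f1·c1 + p(1,1|0), p(0,1|0) = f0·c1 + p(0,1|1), p(1,0|1) = 1 - p(0,0|1) - p(0,1|1) - p(1,1|1), p(0,0|0) = 1 - p(0,1|0) - p(1,0|0) - p(1,1|0). Then all eight quantities lie in [0,1], the probabilities for each z sum to 1, and the monotonicity inequalities p(1,y|1) ≥ p(1,y|0) and p(0,y|1) ≤ p(0,y|0) hold for y = 0,1. -/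
/-- The constructed observed-data probabilities lie in the constrained simplex `Δ`:
all in `[0,1]`, summing to one for each `z`, and satisfying monotonicity. -/
theorem stmt_6 (c1 c2 c3 c4 f0 f1 : ℝ)
    (hc1 : c1 ∈ Set.Icc (0 : ℝ) 1) (hc2 : c2 ∈ Set.Icc (0 : ℝ) 1)
    (hc3 : c3 ∈ Set.Icc (0 : ℝ) 1) (hc4 : c4 ∈ Set.Icc (0 : ℝ) 1)
    (hf0 : f0 ∈ Set.Icc (0 : ℝ) 1) (hf1 : f1 ∈ Set.Icc (0 : ℝ) 1)
    (p011 p001 p110 p100 p111 p010 p101 p000 : ℝ)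
    (h011 : p011 = (1 - c1) * (1 - c2) * c3)
    (h001 : p001 = (1 - c1) * (1 - c2) * (1 - c3))
    (h110 : p110 = (1 - c1) * c2 * c4)
    (h100 : p100 = (1 - c1) * c2 * (1 - c4))
    (h111 : p111 = f1 * c1 + p110)
    (h010 : p010 = f0 * c1 + p011)
    (h101 : p101 = 1 - p001 - p011 - p111)
    (h000 : p000 = 1 - p010 - p100 - p110) :
    (p011 ∈ Set.Icc (0 : ℝ) 1 ∧ p001 ∈ Set.Icc (0 : ℝ) 1 ∧
     p110 ∈ Set.Icc (0 : ℝ) 1 ∧ p100 ∈ Set.Icc (0 : ℝ) 1 ∧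
     p111 ∈ Set.Icc (0 : ℝ) 1 ∧ p010 ∈ Set.Icc (0 : ℝ) 1 ∧
     p101 ∈ Set.Icc (0 : ℝ) 1 ∧ p000 ∈ Set.Icc (0 : ℝ) 1) ∧
    (p001 + p011 + p101 + p111 = 1 ∧ p000 + p010 + p100 + p110 = 1) ∧
    (p111 ≥ p110 ∧ p101 ≥ p100 ∧ p011 ≤ p010 ∧ p001 ≤ p000) := by
  obtain ⟨h1l, h1u⟩ := hc1
  obtain ⟨h2l, h2u⟩ := hc2
  obtain ⟨h3l, h3u⟩ := hc3
  obtain ⟨h4l, h4u⟩ := hc4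
  obtain ⟨hf0l, hf0u⟩ := hf0
  obtain ⟨hf1l, hf1u⟩ := hf1
  subst h011 h001 h110 h100 h111 h010 h101 h000
  have ha : (0:ℝ) ≤ 1 - c1 := by linarith
  have hb : (0:ℝ) ≤ 1 - c2 := by linarith
  have hd : (0:ℝ) ≤ 1 - c3 := by linarith
  have he : (0:ℝ) ≤ 1 - c4 := by linarith
  have hA1 : 0 ≤ (1 - c1) * (1 - c2) * c3 := mul_nonneg (mul_nonneg ha hb) h3l
  have hA2 : 0 ≤ (1 - c1) * (1 - c2) * (1 - c3) := mul_nonneg (mul_nonneg ha hb) hd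
  have hA3 : 0 ≤ (1 - c1) * c2 * c4 := mul_nonneg (mul_nonneg ha h2l) h4l
  have hA4 : 0 ≤ (1 - c1) * c2 * (1 - c4) := mul_nonneg (mul_nonneg ha h2l) he
  have hsum : (1 - c1) * (1 - c2) * c3 + (1 - c1) * (1 - c2) * (1 - c3) +
      (1 - c1) * c2 * c4 + (1 - c1) * c2 * (1 - c4) = 1 - c1 := by ring
  have hf1c1 : 0 ≤ f1 * c1 := mul_nonneg hf1l h1l
  have hf0c1 : 0 ≤ f0 * c1 := mul_nonneg hf0l h1l
  have hg1 : 0 ≤ (1 - f1) * c1 := mul_nonneg (by linarith) h1l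
  have hg0 : 0 ≤ (1 - f0) * c1 := mul_nonneg (by linarith) h1l
  have hg1' : f1 * c1 + (1 - f1) * c1 = c1 := by ring
  have hg0' : f0 * c1 + (1 - f0) * c1 = c1 := by ring
  refine ⟨⟨⟨by linarith, by linarith⟩, ⟨by linarith, by linarith⟩,
    ⟨by linarith, by linarith⟩, ⟨by linarith, by linarith⟩,
    ⟨by linarith, by linarith⟩, ⟨by linarith, by linarith⟩,
    ⟨by linarith, by linarith⟩, ⟨by linarith, by linarith⟩⟩,
    ⟨by ring, by ring⟩, ⟨by linarith, by linarith, by linarith, by linarith⟩⟩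
end

section
/- Let Z, D, Y be random variables, g(X) a measurable function, and suppose E(H | Z=1, X) = E(H | Z=0, X) = m(X) for some measurable m, where H is a function of (Y,D,X). Let π*(X) ∈ (0,1) be arbitrary (possibly misspecified) and f*(Z|X) = π*(X)^Z(1-π*(X))^{1-Z}. Then E[ g(X)·((2Z-1)/f*(Z|X))·(H - m(X)) ] = 0. -/
open MeasureTheory

/-- Conditional mean of `f` given the event `A`. -/
noncomputable def condMean {Ω : Type*} [MeasurableSpace Ω] (μ : Measure Ω)
    (A : Set Ω) (f : Ω → ℝ) : ℝ :=
  (∫ ω in A, f ω ∂μ) / (μ A).toReal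

/-- Unbiasedness of the estimating function under a correct outcome nuisance
`m = E(H|Z=0) = E(H|Z=1)`, for an arbitrary (possibly misspecified) instrumental
density `π* ∈ (0,1)`. All quantities are conditional on a fixed value of `X`, so
`g(X)` and `m(X)` are constants `g`, `m`. -/
theorem stmt_11 {Ω : Type*} [MeasurableSpace Ω] (μ : Measure Ω) [IsProbabilityMeasure μ]
    (Z : Ω → ℝ) (H : Ω → ℝ) (g m πs : ℝ)
    (hZbin : ∀ ω, Z ω = 0 ∨ Z ω = 1)
    (hZ : Measurable Z)
    (hH : Integrable H μ)
    (hZ1 : 0 < μ {ω | Z ω = 1}) (hZ0 : 0 < μ {ω | Z ω = 0})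
    (hπs : πs ∈ Set.Ioo (0 : ℝ) 1)
    (hm1 : condMean μ {ω | Z ω = 1} H = m)
    (hm0 : condMean μ {ω | Z ω = 0} H = m) :
    (∫ ω, g * ((2 * Z ω - 1) / (if Z ω = 1 then πs else 1 - πs)) * (H ω - m) ∂μ) = 0 := by
  obtain ⟨hπ0, hπ1⟩ := hπs
  set A : Set Ω := {ω | Z ω = 1} with hA
  have hAm : MeasurableSet A := hZ (measurableSet_singleton 1)
  have hAc : Aᶜ = {ω | Z ω = 0} := by
    ext ω
    rcases hZbin ω with h | h <;> simp [hA, h]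
  have hμA : (μ A).toReal ≠ 0 := by
    simp [ENNReal.toReal_ne_zero, hZ1.ne', measure_ne_top μ A]
  have hμB : (μ Aᶜ).toReal ≠ 0 := by
    rw [hAc]
    simp [ENNReal.toReal_ne_zero, hZ0.ne', measure_ne_top μ _]
  have hHm : Integrable (fun ω => H ω - m) μ := hH.sub (integrable_const m)
  have key : ∀ (S : Set Ω), MeasurableSet S → condMean μ S H = m → (μ S).toReal ≠ 0 →
      ∫ ω in S, (H ω - m) ∂μ = 0 := by
    intro S hS hc hμS
    unfold condMean at hc
    rw [div_eq_iff hμS] at hc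
    rw [integral_sub hH.integrableOn (integrableOn_const (measure_ne_top μ S))]
    simp [hc, Measure.real]
    ring
  have kA : ∫ ω in A, (H ω - m) ∂μ = 0 := key A hAm hm1 hμA
  have kB : ∫ ω in Aᶜ, (H ω - m) ∂μ = 0 := by
    apply key Aᶜ hAm.compl _ hμB
    rw [hAc]; exact hm0
  have hint : Integrable (fun ω => g * ((2 * Z ω - 1) / (if Z ω = 1 then πs else 1 - πs)) * (H ω - m)) μ := by
    apply Integrable.bdd_mul (c := |g| * (|πs|⁻¹ + |1-πs|⁻¹)) hHm
    · exact (measurable_const.mul (((hZ.const_mul 2).sub measurable_const).div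
        (Measurable.ite (hZ (measurableSet_singleton 1)) measurable_const
          measurable_const))).aestronglyMeasurable
    · refine Filter.Eventually.of_forall (fun ω => ?_)
      have h1 : (0:ℝ) ≤ |πs|⁻¹ := by positivity
      have h2 : (0:ℝ) ≤ |1-πs|⁻¹ := by positivity
      have hg : (0:ℝ) ≤ |g| := abs_nonneg g
      rcases hZbin ω with h | h
      · simp only [abs_mul, h, abs_div, abs_inv]
        norm_num
        nlinarith
      · simp only [abs_mul, h, abs_div, abs_inv]
        norm_num
        nlinarith
  rw [← integral_add_compl hAm hint]
  have e1 : ∫ ω in A, g * ((2 * Z ω - 1) / (if Z ω = 1 then πs else 1 - πs)) * (H ω - m) ∂μ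
      = ∫ ω in A, (g / πs) * (H ω - m) ∂μ := by
    apply setIntegral_congr_fun hAm
    intro ω hω
    have : Z ω = 1 := hω
    dsimp only
    rw [if_pos this, this]
    ring
  have e2 : ∫ ω in Aᶜ, g * ((2 * Z ω - 1) / (if Z ω = 1 then πs else 1 - πs)) * (H ω - m) ∂μ
      = ∫ ω in Aᶜ, (-g / (1 - πs)) * (H ω - m) ∂μ := by
    apply setIntegral_congr_fun hAm.compl
    intro ω hω
    have h0 : Z ω = 0 := by rw [hAc] at hω; exact hω
    have h1 : Z ω ≠ 1 := by rw [h0]; norm_num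
    dsimp only
    rw [if_neg h1, h0]
    ring
  rw [e1, e2, integral_const_mul, integral_const_mul, kA, kB]
  ring
end

section
/- Let Z be binary with true P(Z=1|X) = π(X) ∈ (0,1), f(Z|X) = π(X)^Z(1-π(X))^{1-Z}, and suppose E(H | Z=1, X) = E(H | Z=0, X). Then for any measurable functions g(X) and m*(X), E[ g(X)·((2Z-1)/f(Z|X))·(H - m*(X)) ] = 0. -/
open MeasureTheory

/-- Unbiasedness of the estimating function under a correctly specified instrumental
density `π = P(Z=1)` and an arbitrary (possibly misspecified) nuisance constant `ms`,
given that `E(H|Z=1) = E(H|Z=0)`. All quantities are conditional on a fixed `X`, so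
`g(X)` and `m*(X)` are constants. -/
theorem stmt_12 {Ω : Type*} [MeasurableSpace Ω] (μ : Measure Ω) [IsProbabilityMeasure μ]
    (Z : Ω → ℝ) (H : Ω → ℝ) (π g ms : ℝ)
    (hZbin : ∀ ω, Z ω = 0 ∨ Z ω = 1)
    (hZ : Measurable Z)
    (hH : Integrable H μ)
    (hπ : π ∈ Set.Ioo (0 : ℝ) 1)
    (hπeq : (μ {ω | Z ω = 1}).toReal = π)
    (hHeq : condMean μ {ω | Z ω = 1} H = condMean μ {ω | Z ω = 0} H) :
    (∫ ω, g * ((2 * Z ω - 1) / (if Z ω = 1 then π else 1 - π)) * (H ω - ms) ∂μ) = 0 := by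
  obtain ⟨hπ0, hπ1⟩ := hπ
  have hπne : π ≠ 0 := ne_of_gt hπ0
  have h1π : (1 : ℝ) - π ≠ 0 := by linarith
  set A : Set Ω := {ω | Z ω = 1} with hA
  have hAm : MeasurableSet A := hZ (measurableSet_singleton 1)
  have hBcompl : {ω | Z ω = 0} = Aᶜ := by
    ext ω
    rcases hZbin ω with h | h <;> simp [hA, h]
  have hμA : μ A ≤ 1 := prob_le_one
  have hμAc : (μ Aᶜ).toReal = 1 - π := by
    rw [measure_compl hAm (measure_ne_top μ A), measure_univ,
      ENNReal.toReal_sub_of_le hμA ENNReal.one_ne_top, ENNReal.toReal_one, hπeq]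
  -- integrability pieces
  have hHms : Integrable (fun ω => H ω - ms) μ := hH.sub (integrable_const ms)
  have hI1 : Integrable (A.indicator (fun ω => (g / π) * (H ω - ms))) μ :=
    ((hHms.const_mul _)).indicator hAm
  have hI2 : Integrable (Aᶜ.indicator (fun ω => (-(g / (1 - π))) * (H ω - ms))) μ :=
    ((hHms.const_mul _)).indicator hAm.compl
  have hfun : (fun ω => g * ((2 * Z ω - 1) / (if Z ω = 1 then π else 1 - π)) * (H ω - ms))
      = fun ω => A.indicator (fun ω => (g / π) * (H ω - ms)) ω
        + Aᶜ.indicator (fun ω => (-(g / (1 - π))) * (H ω - ms)) ω := by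
    funext ω
    rcases hZbin ω with h | h
    · have hωA : ω ∉ A := by simp [hA, h]
      simp [h, Set.indicator_of_notMem hωA, Set.indicator_of_mem (Set.mem_compl hωA)]
      ring
    · have hωA : ω ∈ A := h
      simp [h, Set.indicator_of_mem hωA, Set.indicator_of_notMem (by simp [hωA] :
        ω ∉ Aᶜ)]
      left; norm_num; rw [div_eq_mul_inv]
  rw [hfun, integral_add hI1 hI2, integral_indicator hAm, integral_indicator hAm.compl,
    integral_const_mul, integral_const_mul,
    integral_sub (hH.restrict) (integrable_const ms),
    integral_sub (hH.restrict) (integrable_const ms)]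
  have hcA : ∫ ω in A, H ω ∂μ = condMean μ A H * π := by
    rw [condMean, hπeq]; field_simp
  have hcB : ∫ ω in Aᶜ, H ω ∂μ = condMean μ A H * (1 - π) := by
    rw [hHeq, hBcompl, condMean, hμAc]; field_simp
  rw [hcA, hcB, setIntegral_const, setIntegral_const, measureReal_def, measureReal_def, hπeq, hμAc, smul_eq_mul, smul_eq_mul]
  field_simp
  ring
end

section
/- Under assumptions: Y(z,d) = Y(d) a.s. (exclusion), Z ⫫ (Y(d), D(z)) | X (independence), D(1) ≥ D(0) a.s. (monotonicity), and consistency D = D(Z), Y = Y(D), with P(D(1) > D(0) | X) > 0: E(Y|Z=1,X) - E(Y|Z=0,X) = E[Y(1) - Y(0) | D(1) > D(0), X] · P(D(1) > D(0) | X). -/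
open MeasureTheory ProbabilityTheory

lemma condMean_of_indep {Ω : Type*} [MeasurableSpace Ω] (μ : Measure Ω)
    [IsProbabilityMeasure μ] (Z W : Ω → ℝ) (c : ℝ) (hZ : Measurable Z)
    (hWint : Integrable W μ) (hind : IndepFun Z W μ)
    (hpos : 0 < μ {ω | Z ω = c}) :
    condMean μ {ω | Z ω = c} W = ∫ ω, W ω ∂μ := by
  set S := {ω | Z ω = c} with hS
  have hSm : MeasurableSet S := hZ (measurableSet_singleton c)
  have hI : IndepFun (S.indicator (1 : Ω → ℝ)) W μ := by
    have heq : S.indicator (1 : Ω → ℝ)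
        = (fun x : ℝ => if x = c then (1:ℝ) else 0) ∘ Z := by
      ext ω
      by_cases h : Z ω = c <;> simp [Set.indicator, hS, h, Set.mem_setOf_eq]
    rw [heq]
    exact hind.comp (Measurable.ite (measurableSet_eq) measurable_const
      measurable_const) measurable_id
  have hmul : ∫ ω, (S.indicator (1 : Ω → ℝ) ω * W ω) ∂μ
      = (∫ ω, S.indicator (1 : Ω → ℝ) ω ∂μ) * ∫ ω, W ω ∂μ :=
    hI.integral_mul_eq_mul_integral ((measurable_one.indicator hSm).aestronglyMeasurable)
      hWint.aestronglyMeasurable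
  have h1 : ∫ ω, S.indicator (1 : Ω → ℝ) ω ∂μ = (μ S).toReal := by
    simp [integral_indicator_one hSm, Measure.real]
  have h2 : ∫ ω, (S.indicator (1 : Ω → ℝ) ω * W ω) ∂μ = ∫ ω in S, W ω ∂μ := by
    rw [← integral_indicator hSm]
    congr 1; ext ω
    by_cases h : ω ∈ S <;> simp [Set.indicator, h]
  have hne : (μ S).toReal ≠ 0 := by
    have := measure_ne_top μ S
    simp [ENNReal.toReal_eq_zero_iff, hpos.ne', this]
  rw [condMean, h2.symm, hmul, h1, mul_div_assoc, mul_comm]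
  field_simp

/-- Key decomposition behind the Wald formula: under exclusion (encoded by the
potential outcomes `Y0, Y1` depending only on treatment), independence of `Z` from the
potential outcomes, monotonicity, consistency, and positivity, the instrument contrast
of the observed outcome equals the complier average effect times the complier
probability. All quantities are conditional on a fixed value of `X`. -/
theorem stmt_13 {Ω : Type*} [MeasurableSpace Ω] (μ : Measure Ω) [IsProbabilityMeasure μ]
    (Z D Y D0 D1 Y0 Y1 : Ω → ℝ)
    (hZbin : ∀ ω, Z ω = 0 ∨ Z ω = 1)
    (hD0bin : ∀ ω, D0 ω = 0 ∨ D0 ω = 1) (hD1bin : ∀ ω, D1 ω = 0 ∨ D1 ω = 1)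
    (hZ : Measurable Z) (hD0 : Measurable D0) (hD1 : Measurable D1)
    (hY0 : Measurable Y0) (hY1 : Measurable Y1)
    (hY0int : Integrable Y0 μ) (hY1int : Integrable Y1 μ)
    -- independence: Z ⫫ (Y(0), Y(1), D(0), D(1)) (given X)
    (hindep : IndepFun Z (fun ω => (Y0 ω, Y1 ω, D0 ω, D1 ω)) μ)
    -- monotonicity: D(1) ≥ D(0) a.s. (here everywhere)
    (hmono : ∀ ω, D0 ω ≤ D1 ω)
    -- consistency: D = D(Z), Y = Y(D)
    (hD : ∀ ω, D ω = if Z ω = 1 then D1 ω else D0 ω)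
    (hY : ∀ ω, Y ω = if D ω = 1 then Y1 ω else Y0 ω)
    -- positivity
    (hZ1 : 0 < μ {ω | Z ω = 1}) (hZ0 : 0 < μ {ω | Z ω = 0})
    (hCO : 0 < μ {ω | D0 ω < D1 ω}) :
    condMean μ {ω | Z ω = 1} Y - condMean μ {ω | Z ω = 0} Y =
      condMean μ {ω | D0 ω < D1 ω} (fun ω => Y1 ω - Y0 ω) *
        (μ {ω | D0 ω < D1 ω}).toReal := by
  -- g: outcome when forcing Z = 1, h: when forcing Z = 0
  set g : Ω → ℝ := fun ω => Y0 ω + D1 ω * (Y1 ω - Y0 ω) with hg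
  set h : Ω → ℝ := fun ω => Y0 ω + D0 ω * (Y1 ω - Y0 ω) with hh
  have hYsub : Integrable (fun ω => Y1 ω - Y0 ω) μ := hY1int.sub hY0int
  have hgint : Integrable g μ := by
    refine hY0int.add (Integrable.bdd_mul hYsub hD1.aestronglyMeasurable (c := 1) (Filter.Eventually.of_forall fun ω => ?_))
    rcases hD1bin ω with h' | h' <;> simp [h']
  have hhint : Integrable h μ := by
    refine hY0int.add (Integrable.bdd_mul hYsub hD0.aestronglyMeasurable (c := 1) (Filter.Eventually.of_forall fun ω => ?_))
    rcases hD0bin ω with h' | h' <;> simp [h']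
  have hindg : IndepFun Z g μ := by
    have : g = (fun p : ℝ × ℝ × ℝ × ℝ => p.1 + p.2.2.2 * (p.2.1 - p.1)) ∘
        (fun ω => (Y0 ω, Y1 ω, D0 ω, D1 ω)) := rfl
    rw [this]
    exact hindep.comp measurable_id (by fun_prop)
  have hindh : IndepFun Z h μ := by
    have : h = (fun p : ℝ × ℝ × ℝ × ℝ => p.1 + p.2.2.1 * (p.2.1 - p.1)) ∘
        (fun ω => (Y0 ω, Y1 ω, D0 ω, D1 ω)) := rfl
    rw [this]
    exact hindep.comp measurable_id (by fun_prop)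
  -- on {Z = 1}, Y = g; on {Z = 0}, Y = h
  have hYg : Set.EqOn Y g {ω | Z ω = 1} := by
    intro ω hω
    simp only [Set.mem_setOf_eq] at hω
    rw [hY, hD, if_pos hω, hg]
    rcases hD1bin ω with h' | h' <;> simp [h'] <;> ring
  have hYh : Set.EqOn Y h {ω | Z ω = 0} := by
    intro ω hω
    simp only [Set.mem_setOf_eq] at hω
    have hz : Z ω ≠ 1 := by rw [hω]; norm_num
    rw [hY, hD, if_neg hz, hh]
    rcases hD0bin ω with h' | h' <;> simp [h'] <;> ring
  have hS1m : MeasurableSet {ω | Z ω = 1} := hZ (measurableSet_singleton 1)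
  have hS0m : MeasurableSet {ω | Z ω = 0} := hZ (measurableSet_singleton 0)
  have e1 : condMean μ {ω | Z ω = 1} Y = ∫ ω, g ω ∂μ := by
    rw [condMean, setIntegral_congr_fun hS1m hYg]
    exact condMean_of_indep μ Z g 1 hZ hgint hindg hZ1
  have e0 : condMean μ {ω | Z ω = 0} Y = ∫ ω, h ω ∂μ := by
    rw [condMean, setIntegral_congr_fun hS0m hYh]
    exact condMean_of_indep μ Z h 0 hZ hhint hindh hZ0
  -- combine
  have hCm : MeasurableSet {ω | D0 ω < D1 ω} := measurableSet_lt hD0 hD1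
  have ediff : (∫ ω, g ω ∂μ) - ∫ ω, h ω ∂μ
      = ∫ ω in {ω | D0 ω < D1 ω}, (Y1 ω - Y0 ω) ∂μ := by
    rw [← integral_sub hgint hhint, ← integral_indicator hCm]
    congr 1; ext ω
    by_cases hc : D0 ω < D1 ω
    · have h0 : D0 ω = 0 := by
        rcases hD0bin ω with h' | h'
        · exact h'
        · rcases hD1bin ω with h'' | h'' <;> rw [h', h''] at hc <;> linarith
      have h1 : D1 ω = 1 := by
        rcases hD1bin ω with h' | h'
        · rw [h0, h'] at hc; linarith
        · exact h'
      have hmem : ω ∈ {ω | D0 ω < D1 ω} := hc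
      rw [Set.indicator_of_mem hmem]
      simp only [hg, hh, h0, h1]
      ring
    · have heq' : D0 ω = D1 ω := le_antisymm (hmono ω) (not_lt.mp hc)
      have hmem : ω ∉ {ω | D0 ω < D1 ω} := hc
      rw [Set.indicator_of_notMem hmem]
      simp only [hg, hh, heq']
      ring
  have hne : (μ {ω | D0 ω < D1 ω}).toReal ≠ 0 := by
    have := measure_ne_top μ {ω | D0 ω < D1 ω}
    simp [ENNReal.toReal_eq_zero_iff, hCO.ne', this]
  rw [e1, e0, ediff, condMean, div_mul_cancel₀ _ hne]
end

section
/- Under the assumptions of the binary IV model with monotonicity (exclusion, independence given X, consistency, D(1) ≥ D(0) a.s., P(D(1)>D(0)|X) > 0, and E(D|Z=1,X) ≠ E(D|Z=0,X)): E[Y(1) - Y(0) | D(1) > D(0), X] = (E(Y|Z=1,X) - E(Y|Z=0,X)) / (E(D|Z=1,X) - E(D|Z=0,X)). -/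
open MeasureTheory ProbabilityTheory

lemma indep_setIntegral {Ω : Type*} [MeasurableSpace Ω] (μ : Measure Ω)
    [IsProbabilityMeasure μ]
    (Z : Ω → ℝ) (W : Ω → ℝ × ℝ × ℝ × ℝ) (hZ : Measurable Z)
    (hindep : IndepFun Z W μ) (c : ℝ) (g : ℝ × ℝ × ℝ × ℝ → ℝ) (hg : Measurable g)
    (hint : Integrable (fun ω => g (W ω)) μ) :
    ∫ ω in {ω | Z ω = c}, g (W ω) ∂μ = (μ {ω | Z ω = c}).toReal * ∫ ω, g (W ω) ∂μ := by
  set φ : ℝ → ℝ := Set.indicator {c} 1 with hφ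
  have hφm : Measurable φ := measurable_const.indicator (measurableSet_singleton c)
  have hA : MeasurableSet {ω | Z ω = c} := hZ (measurableSet_singleton c)
  have hφint : Integrable (fun ω => φ (Z ω)) μ := by
    have : (fun ω => φ (Z ω)) = Set.indicator {ω | Z ω = c} (fun _ => (1:ℝ)) := by
      funext ω
      by_cases h : Z ω = c <;>
        simp [hφ, Set.indicator, h]
    rw [this]
    exact (integrable_const 1).indicator hA
  have h1 : IndepFun (fun ω => φ (Z ω)) (fun ω => g (W ω)) μ := hindep.comp hφm hg
  have h2 := h1.integral_fun_mul_eq_mul_integral hφint.aestronglyMeasurable hint.aestronglyMeasurable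
  have h3 : (fun ω => φ (Z ω) * g (W ω)) = Set.indicator {ω | Z ω = c} (fun ω => g (W ω)) := by
    funext ω
    by_cases h : Z ω = c <;> simp [hφ, Set.indicator, h]
  have h2' : ∫ ω, φ (Z ω) * g (W ω) ∂μ = (∫ ω, φ (Z ω) ∂μ) * ∫ ω, g (W ω) ∂μ := h2
  have h4 : ∫ ω, φ (Z ω) * g (W ω) ∂μ = ∫ ω in {ω | Z ω = c}, g (W ω) ∂μ := by
    calc ∫ ω, φ (Z ω) * g (W ω) ∂μ
        = ∫ ω, Set.indicator {ω | Z ω = c} (fun ω => g (W ω)) ω ∂μ := by rw [h3]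
      _ = ∫ ω in {ω | Z ω = c}, g (W ω) ∂μ := integral_indicator hA
  have h5 : ∫ ω, φ (Z ω) ∂μ = (μ {ω | Z ω = c}).toReal := by
    have : (fun ω => φ (Z ω)) = Set.indicator {ω | Z ω = c} (fun _ => (1:ℝ)) := by
      funext ω
      by_cases h : Z ω = c <;> simp [hφ, Set.indicator, h]
    rw [this, integral_indicator hA]
    simp
    rfl
  rw [← h4, h2', h5]

/-- Conditional Wald identification formula for the additive local average treatment
effect (Abadie's Lemma 2.1), conditional on a fixed value of the covariates `X`. -/
theorem stmt_14 {Ω : Type*} [MeasurableSpace Ω] (μ : Measure Ω) [IsProbabilityMeasure μ]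
    (Z D Y D0 D1 Y0 Y1 : Ω → ℝ)
    (hZbin : ∀ ω, Z ω = 0 ∨ Z ω = 1)
    (hD0bin : ∀ ω, D0 ω = 0 ∨ D0 ω = 1) (hD1bin : ∀ ω, D1 ω = 0 ∨ D1 ω = 1)
    (hZ : Measurable Z) (hD0 : Measurable D0) (hD1 : Measurable D1)
    (hY0 : Measurable Y0) (hY1 : Measurable Y1)
    (hY0int : Integrable Y0 μ) (hY1int : Integrable Y1 μ)
    (hindep : IndepFun Z (fun ω => (Y0 ω, Y1 ω, D0 ω, D1 ω)) μ)
    (hmono : ∀ ω, D0 ω ≤ D1 ω)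
    (hD : ∀ ω, D ω = if Z ω = 1 then D1 ω else D0 ω)
    (hY : ∀ ω, Y ω = if D ω = 1 then Y1 ω else Y0 ω)
    (hZ1 : 0 < μ {ω | Z ω = 1}) (hZ0 : 0 < μ {ω | Z ω = 0})
    (hCO : 0 < μ {ω | D0 ω < D1 ω})
    (hrel : condMean μ {ω | Z ω = 1} D ≠ condMean μ {ω | Z ω = 0} D) :
    condMean μ {ω | D0 ω < D1 ω} (fun ω => Y1 ω - Y0 ω) =
      (condMean μ {ω | Z ω = 1} Y - condMean μ {ω | Z ω = 0} Y) /
        (condMean μ {ω | Z ω = 1} D - condMean μ {ω | Z ω = 0} D) := by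
  classical
  set W : Ω → ℝ × ℝ × ℝ × ℝ := fun ω => (Y0 ω, Y1 ω, D0 ω, D1 ω) with hW
  -- component functions on ℝ⁴
  set g1 : ℝ × ℝ × ℝ × ℝ → ℝ := fun p => p.1 + p.2.2.2 * (p.2.1 - p.1) with hg1
  set g0 : ℝ × ℝ × ℝ × ℝ → ℝ := fun p => p.1 + p.2.2.1 * (p.2.1 - p.1) with hg0
  set gD1 : ℝ × ℝ × ℝ × ℝ → ℝ := fun p => p.2.2.2 with hgD1
  set gD0 : ℝ × ℝ × ℝ × ℝ → ℝ := fun p => p.2.2.1 with hgD0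
  have hg1m : Measurable g1 := by fun_prop
  have hg0m : Measurable g0 := by fun_prop
  have hgD1m : Measurable gD1 := by fun_prop
  have hgD0m : Measurable gD0 := by fun_prop
  -- integrability
  have hsub : Integrable (fun ω => Y1 ω - Y0 ω) μ := hY1int.sub hY0int
  have hind1 : Integrable (fun ω => D1 ω * (Y1 ω - Y0 ω)) μ := by
    have : (fun ω => D1 ω * (Y1 ω - Y0 ω)) =
        Set.indicator {ω | D1 ω = 1} (fun ω => Y1 ω - Y0 ω) := by
      funext ω
      rcases hD1bin ω with h | h <;> simp [Set.indicator, h]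
    rw [this]
    exact hsub.indicator (hD1 (measurableSet_singleton 1))
  have hind0 : Integrable (fun ω => D0 ω * (Y1 ω - Y0 ω)) μ := by
    have : (fun ω => D0 ω * (Y1 ω - Y0 ω)) =
        Set.indicator {ω | D0 ω = 1} (fun ω => Y1 ω - Y0 ω) := by
      funext ω
      rcases hD0bin ω with h | h <;> simp [Set.indicator, h]
    rw [this]
    exact hsub.indicator (hD0 (measurableSet_singleton 1))
  have hf1int : Integrable (fun ω => g1 (W ω)) μ := by
    simp only [hg1, hW]
    exact hY0int.add hind1
  have hf0int : Integrable (fun ω => g0 (W ω)) μ := by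
    simp only [hg0, hW]
    exact hY0int.add hind0
  have hD1int : Integrable (fun ω => gD1 (W ω)) μ := by
    have : (fun ω => gD1 (W ω)) = Set.indicator {ω | D1 ω = 1} (fun _ => (1:ℝ)) := by
      funext ω
      rcases hD1bin ω with h | h <;> simp [Set.indicator, hgD1, hW, h]
    rw [this]
    exact (integrable_const 1).indicator (hD1 (measurableSet_singleton 1))
  have hD0int : Integrable (fun ω => gD0 (W ω)) μ := by
    have : (fun ω => gD0 (W ω)) = Set.indicator {ω | D0 ω = 1} (fun _ => (1:ℝ)) := by
      funext ω
      rcases hD0bin ω with h | h <;> simp [Set.indicator, hgD0, hW, h]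
    rw [this]
    exact (integrable_const 1).indicator (hD0 (measurableSet_singleton 1))
  -- measurable sets
  have hA1 : MeasurableSet {ω | Z ω = 1} := hZ (measurableSet_singleton 1)
  have hA0 : MeasurableSet {ω | Z ω = 0} := hZ (measurableSet_singleton 0)
  have hC : MeasurableSet {ω | D0 ω < D1 ω} := measurableSet_lt hD0 hD1
  -- nonzero toReal of Z-event measures
  have hZ1' : (μ {ω | Z ω = 1}).toReal ≠ 0 :=
    (ENNReal.toReal_pos hZ1.ne' (measure_ne_top μ _)).ne'
  have hZ0' : (μ {ω | Z ω = 0}).toReal ≠ 0 :=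
    (ENNReal.toReal_pos hZ0.ne' (measure_ne_top μ _)).ne'
  -- pointwise identities on Z-events
  have hEqY1 : Set.EqOn Y (fun ω => g1 (W ω)) {ω | Z ω = 1} := by
    intro ω hω
    have hZω : Z ω = 1 := hω
    have hDω : D ω = D1 ω := by rw [hD ω, if_pos hZω]
    rcases hD1bin ω with h | h <;>
      simp [hY ω, hDω, h, hg1, hW] <;> ring
  have hEqY0 : Set.EqOn Y (fun ω => g0 (W ω)) {ω | Z ω = 0} := by
    intro ω hω
    have hZω : Z ω = 0 := hω
    have hZω' : Z ω ≠ 1 := by rw [hZω]; norm_num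
    have hDω : D ω = D0 ω := by rw [hD ω, if_neg hZω']
    rcases hD0bin ω with h | h <;>
      simp [hY ω, hDω, h, hg0, hW] <;> ring
  have hEqD1 : Set.EqOn D (fun ω => gD1 (W ω)) {ω | Z ω = 1} := by
    intro ω hω
    have hZω : Z ω = 1 := hω
    simp [hD ω, hZω, hgD1, hW]
  have hEqD0 : Set.EqOn D (fun ω => gD0 (W ω)) {ω | Z ω = 0} := by
    intro ω hω
    have hZω : Z ω = 0 := hω
    have hZω' : Z ω ≠ 1 := by rw [hZω]; norm_num
    simp [hD ω, hZω', hgD0, hW]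
  -- condMean computations via independence
  have key : ∀ (c : ℝ) (f : Ω → ℝ) (g : ℝ × ℝ × ℝ × ℝ → ℝ), Measurable g →
      Integrable (fun ω => g (W ω)) μ → Set.EqOn f (fun ω => g (W ω)) {ω | Z ω = c} →
      (μ {ω | Z ω = c}).toReal ≠ 0 →
      condMean μ {ω | Z ω = c} f = ∫ ω, g (W ω) ∂μ := by
    intro c f g hgm hgint hEq hne
    have hAc : MeasurableSet {ω | Z ω = c} := hZ (measurableSet_singleton c)
    have h1 : ∫ ω in {ω | Z ω = c}, f ω ∂μ = ∫ ω in {ω | Z ω = c}, g (W ω) ∂μ :=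
      setIntegral_congr_fun hAc hEq
    rw [condMean, h1, indep_setIntegral μ Z W hZ hindep c g hgm hgint]
    field_simp
  have e1 : condMean μ {ω | Z ω = 1} Y = ∫ ω, g1 (W ω) ∂μ :=
    key 1 Y g1 hg1m hf1int hEqY1 hZ1'
  have e0 : condMean μ {ω | Z ω = 0} Y = ∫ ω, g0 (W ω) ∂μ :=
    key 0 Y g0 hg0m hf0int hEqY0 hZ0'
  have d1 : condMean μ {ω | Z ω = 1} D = ∫ ω, gD1 (W ω) ∂μ :=
    key 1 D gD1 hgD1m hD1int hEqD1 hZ1'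
  have d0 : condMean μ {ω | Z ω = 0} D = ∫ ω, gD0 (W ω) ∂μ :=
    key 0 D gD0 hgD0m hD0int hEqD0 hZ0'
  -- numerator
  have hnum : (∫ ω, g1 (W ω) ∂μ) - ∫ ω, g0 (W ω) ∂μ =
      ∫ ω in {ω | D0 ω < D1 ω}, (Y1 ω - Y0 ω) ∂μ := by
    rw [← integral_sub hf1int hf0int]
    have : (fun ω => g1 (W ω) - g0 (W ω)) =
        Set.indicator {ω | D0 ω < D1 ω} (fun ω => Y1 ω - Y0 ω) := by
      funext ω
      have hm := hmono ω
      rcases hD0bin ω with h0 | h0 <;> rcases hD1bin ω with h1 | h1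
      · simp only [Set.indicator, Set.mem_setOf_eq, hg1, hg0, hW, h0, h1]
        norm_num
      · simp only [Set.indicator, Set.mem_setOf_eq, hg1, hg0, hW, h0, h1]
        norm_num
      · exfalso; rw [h0, h1] at hm; linarith
      · simp only [Set.indicator, Set.mem_setOf_eq, hg1, hg0, hW, h0, h1]
        norm_num
    rw [this, integral_indicator hC]
  have hden : (∫ ω, gD1 (W ω) ∂μ) - ∫ ω, gD0 (W ω) ∂μ =
      (μ {ω | D0 ω < D1 ω}).toReal := by
    rw [← integral_sub hD1int hD0int]
    have : (fun ω => gD1 (W ω) - gD0 (W ω)) =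
        Set.indicator {ω | D0 ω < D1 ω} (fun _ => (1:ℝ)) := by
      funext ω
      have hm := hmono ω
      rcases hD0bin ω with h0 | h0 <;> rcases hD1bin ω with h1 | h1
      · simp only [Set.indicator, Set.mem_setOf_eq, hgD1, hgD0, hW, h0, h1]
        norm_num
      · simp only [Set.indicator, Set.mem_setOf_eq, hgD1, hgD0, hW, h0, h1]
        norm_num
      · exfalso; rw [h0, h1] at hm; linarith
      · simp only [Set.indicator, Set.mem_setOf_eq, hgD1, hgD0, hW, h0, h1]
        norm_num
    rw [this, integral_indicator hC]
    simp
    rfl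
  rw [e1, e0, d1, d0, hnum, hden, condMean]
end

section
/- Under the binary IV model with monotonicity (exclusion, independence given X, consistency, D(1) ≥ D(0) a.s., and suitable nondegeneracy): E[Y(1) | D(1)>D(0), X] · P(D(1)>D(0)|X) = E(YD | Z=1, X) - E(YD | Z=0, X), and E[Y(0) | D(1)>D(0), X] · P(D(1)>D(0)|X) = E(Y(1-D) | Z=0, X) - E(Y(1-D) | Z=1, X). -/
open MeasureTheory ProbabilityTheory

lemma toReal_ne_zero' {Ω : Type*} [MeasurableSpace Ω] {μ : Measure Ω} [IsFiniteMeasure μ]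
    {A : Set Ω} (hA : 0 < μ A) : (μ A).toReal ≠ 0 :=
  (ENNReal.toReal_pos hA.ne' (measure_ne_top μ A)).ne'

lemma condMean_mul {Ω : Type*} [MeasurableSpace Ω] (μ : Measure Ω) [IsFiniteMeasure μ]
    (A : Set Ω) (f : Ω → ℝ) (hA : 0 < μ A) :
    condMean μ A f * (μ A).toReal = ∫ ω in A, f ω ∂μ :=
  div_mul_cancel₀ _ (toReal_ne_zero' hA)

lemma integrable_of_bdd {Ω : Type*} [MeasurableSpace Ω] {μ : Measure Ω} [IsFiniteMeasure μ]
    {f : Ω → ℝ} (hf : Measurable f) {C : ℝ} (h : ∀ ω, |f ω| ≤ C) : Integrable f μ :=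
  (integrable_const C).mono' hf.aestronglyMeasurable (Filter.Eventually.of_forall fun ω => by
    simpa using h ω)

lemma setIntegral_indep {Ω : Type*} [MeasurableSpace Ω] {μ : Measure Ω} [IsProbabilityMeasure μ]
    {Z : Ω → ℝ} {T : Ω → ℝ × ℝ × ℝ × ℝ} {ψ : ℝ × ℝ × ℝ × ℝ → ℝ} (z : ℝ)
    (hZ : Measurable Z) (hT : Measurable T) (hψ : Measurable ψ)
    (hindep : IndepFun Z T μ) :
    ∫ ω in {ω | Z ω = z}, ψ (T ω) ∂μ = (μ {ω | Z ω = z}).toReal * ∫ ω, ψ (T ω) ∂μ := by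
  have hsetR : MeasurableSet {r : ℝ | r = z} := measurableSet_singleton z
  have hset : MeasurableSet {ω | Z ω = z} := hZ hsetR
  set χ : ℝ → ℝ := fun r => if r = z then 1 else 0 with hχdef
  have hχ : Measurable χ := Measurable.ite hsetR measurable_const measurable_const
  have hind : IndepFun (χ ∘ Z) (ψ ∘ T) μ := hindep.comp hχ hψ
  have hmul := hind.integral_mul_eq_mul_integral (hχ.comp hZ).aestronglyMeasurable
    (by exact (hψ.comp hT).aestronglyMeasurable)
  have h1 : ∫ ω in {ω | Z ω = z}, ψ (T ω) ∂μ = ∫ ω, (χ ∘ Z) ω * (ψ ∘ T) ω ∂μ := by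
    rw [← integral_indicator hset]
    congr 1
    funext ω
    by_cases h : Z ω = z
    · simp [Set.indicator, h, hχdef]
    · simp [Set.indicator, h, hχdef]
  have h2 : ∫ ω, (χ ∘ Z) ω ∂μ = (μ {ω | Z ω = z}).toReal := by
    have : (χ ∘ Z) = Set.indicator {ω | Z ω = z} (fun _ => (1 : ℝ)) := by
      funext ω; by_cases h : Z ω = z <;> simp [Set.indicator, h, hχdef]
    rw [this, integral_indicator hset]
    simp [Measure.real]
  calc ∫ ω in {ω | Z ω = z}, ψ (T ω) ∂μ = ∫ ω, ((χ ∘ Z) * (ψ ∘ T)) ω ∂μ := h1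
    _ = (∫ ω, (χ ∘ Z) ω ∂μ) * ∫ ω, (ψ ∘ T) ω ∂μ := hmul
    _ = (μ {ω | Z ω = z}).toReal * ∫ ω, ψ (T ω) ∂μ := by rw [h2]; rfl

/-- Identification of the numerator and denominator of the multiplicative local
average treatment effect: `E[Y(1)|CO] P(CO) = E(YD|Z=1) - E(YD|Z=0)` and
`E[Y(0)|CO] P(CO) = E(Y(1-D)|Z=0) - E(Y(1-D)|Z=1)`, conditional on a fixed `X`. -/
theorem stmt_15 {Ω : Type*} [MeasurableSpace Ω] (μ : Measure Ω) [IsProbabilityMeasure μ]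
    (Z D Y D0 D1 Y0 Y1 : Ω → ℝ)
    (hZbin : ∀ ω, Z ω = 0 ∨ Z ω = 1)
    (hD0bin : ∀ ω, D0 ω = 0 ∨ D0 ω = 1) (hD1bin : ∀ ω, D1 ω = 0 ∨ D1 ω = 1)
    (hZ : Measurable Z) (hD0 : Measurable D0) (hD1 : Measurable D1)
    (hY0 : Measurable Y0) (hY1 : Measurable Y1)
    (hY0bdd : ∃ C, ∀ ω, |Y0 ω| ≤ C) (hY1bdd : ∃ C, ∀ ω, |Y1 ω| ≤ C)
    (hindep : IndepFun Z (fun ω => (Y0 ω, Y1 ω, D0 ω, D1 ω)) μ)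
    (hmono : ∀ ω, D0 ω ≤ D1 ω)
    (hD : ∀ ω, D ω = if Z ω = 1 then D1 ω else D0 ω)
    (hY : ∀ ω, Y ω = if D ω = 1 then Y1 ω else Y0 ω)
    (hZ1 : 0 < μ {ω | Z ω = 1}) (hZ0 : 0 < μ {ω | Z ω = 0})
    (hCO : 0 < μ {ω | D0 ω < D1 ω}) :
    condMean μ {ω | D0 ω < D1 ω} Y1 * (μ {ω | D0 ω < D1 ω}).toReal =
      condMean μ {ω | Z ω = 1} (fun ω => Y ω * D ω) -
        condMean μ {ω | Z ω = 0} (fun ω => Y ω * D ω) ∧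
    condMean μ {ω | D0 ω < D1 ω} Y0 * (μ {ω | D0 ω < D1 ω}).toReal =
      condMean μ {ω | Z ω = 0} (fun ω => Y ω * (1 - D ω)) -
        condMean μ {ω | Z ω = 1} (fun ω => Y ω * (1 - D ω)) := by
  obtain ⟨C0, hC0⟩ := hY0bdd
  obtain ⟨C1, hC1⟩ := hY1bdd
  have hA1 : MeasurableSet {ω | Z ω = 1} := hZ (measurableSet_singleton 1)
  have hA0 : MeasurableSet {ω | Z ω = 0} := hZ (measurableSet_singleton 0)
  have hCOs : MeasurableSet {ω | D0 ω < D1 ω} := measurableSet_lt hD0 hD1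
  have hT : Measurable (fun ω => (Y0 ω, Y1 ω, D0 ω, D1 ω)) := by fun_prop
  -- boundedness of the four products
  have hb11 : ∀ ω, |Y1 ω * D1 ω| ≤ C1 := by
    intro ω; rcases hD1bin ω with h|h <;> simp [h]
    · exact (abs_nonneg _).trans (hC1 ω)
    · exact hC1 ω
  have hb10 : ∀ ω, |Y1 ω * D0 ω| ≤ C1 := by
    intro ω; rcases hD0bin ω with h|h <;> simp [h]
    · exact (abs_nonneg _).trans (hC1 ω)
    · exact hC1 ω
  have hb00 : ∀ ω, |Y0 ω * (1 - D0 ω)| ≤ C0 := by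
    intro ω; rcases hD0bin ω with h|h <;> simp [h]
    · exact hC0 ω
    · exact (abs_nonneg _).trans (hC0 ω)
  have hb01 : ∀ ω, |Y0 ω * (1 - D1 ω)| ≤ C0 := by
    intro ω; rcases hD1bin ω with h|h <;> simp [h]
    · exact hC0 ω
    · exact (abs_nonneg _).trans (hC0 ω)
  have hi11 : Integrable (fun ω => Y1 ω * D1 ω) μ := integrable_of_bdd (by fun_prop) hb11
  have hi10 : Integrable (fun ω => Y1 ω * D0 ω) μ := integrable_of_bdd (by fun_prop) hb10
  have hi00 : Integrable (fun ω => Y0 ω * (1 - D0 ω)) μ := integrable_of_bdd (by fun_prop) hb00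
  have hi01 : Integrable (fun ω => Y0 ω * (1 - D1 ω)) μ := integrable_of_bdd (by fun_prop) hb01
  -- pointwise identities on the Z-events
  have hpt11 : ∀ ω ∈ {ω | Z ω = 1}, Y ω * D ω = Y1 ω * D1 ω := by
    intro ω hω
    have hz : Z ω = 1 := hω
    rcases hD1bin ω with h|h <;> simp [hY, hD, hz, h]
  have hpt10 : ∀ ω ∈ {ω | Z ω = 0}, Y ω * D ω = Y1 ω * D0 ω := by
    intro ω hω
    have hz : Z ω = 0 := hω
    have hz' : ¬ (Z ω = 1) := by rw [hz]; norm_num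
    rcases hD0bin ω with h|h <;> simp [hY, hD, hz', h]
  have hpt00 : ∀ ω ∈ {ω | Z ω = 0}, Y ω * (1 - D ω) = Y0 ω * (1 - D0 ω) := by
    intro ω hω
    have hz : Z ω = 0 := hω
    have hz' : ¬ (Z ω = 1) := by rw [hz]; norm_num
    rcases hD0bin ω with h|h <;> simp [hY, hD, hz', h]
  have hpt01 : ∀ ω ∈ {ω | Z ω = 1}, Y ω * (1 - D ω) = Y0 ω * (1 - D1 ω) := by
    intro ω hω
    have hz : Z ω = 1 := hω
    rcases hD1bin ω with h|h <;> simp [hY, hD, hz, h]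
  -- independence-based identification of each conditional mean
  have key : ∀ (z : ℝ), MeasurableSet {ω | Z ω = z} → 0 < μ {ω | Z ω = z} →
      ∀ (f g : Ω → ℝ) (ψ : ℝ × ℝ × ℝ × ℝ → ℝ), Measurable ψ →
      (∀ ω, g ω = ψ (Y0 ω, Y1 ω, D0 ω, D1 ω)) →
      (∀ ω ∈ {ω | Z ω = z}, f ω = g ω) →
      condMean μ {ω | Z ω = z} f = ∫ ω, g ω ∂μ := by
    intro z hAs hApos f g ψ hψ hg hfg
    have h1 : ∫ ω in {ω | Z ω = z}, f ω ∂μ = ∫ ω in {ω | Z ω = z}, ψ ((fun ω => (Y0 ω, Y1 ω, D0 ω, D1 ω)) ω) ∂μ := by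
      refine setIntegral_congr_fun hAs ?_
      intro ω hω; rw [hfg ω hω, hg ω]
    have h2 := setIntegral_indep (μ := μ) z hZ hT hψ hindep
    have h3 : ∫ ω, ψ ((fun ω => (Y0 ω, Y1 ω, D0 ω, D1 ω)) ω) ∂μ = ∫ ω, g ω ∂μ := by
      congr 1; funext ω; rw [hg ω]
    unfold condMean
    rw [h1, h2, h3, mul_comm]; exact mul_div_cancel_right₀ _ (toReal_ne_zero' hApos)
  have e11 : condMean μ {ω | Z ω = 1} (fun ω => Y ω * D ω) = ∫ ω, Y1 ω * D1 ω ∂μ :=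
    key 1 hA1 hZ1 _ _ (fun p => p.2.1 * p.2.2.2) (by fun_prop) (fun ω => rfl) hpt11
  have e10 : condMean μ {ω | Z ω = 0} (fun ω => Y ω * D ω) = ∫ ω, Y1 ω * D0 ω ∂μ :=
    key 0 hA0 hZ0 _ _ (fun p => p.2.1 * p.2.2.1) (by fun_prop) (fun ω => rfl) hpt10
  have e00 : condMean μ {ω | Z ω = 0} (fun ω => Y ω * (1 - D ω)) = ∫ ω, Y0 ω * (1 - D0 ω) ∂μ :=
    key 0 hA0 hZ0 _ _ (fun p => p.1 * (1 - p.2.2.1)) (by fun_prop) (fun ω => rfl) hpt00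
  have e01 : condMean μ {ω | Z ω = 1} (fun ω => Y ω * (1 - D ω)) = ∫ ω, Y0 ω * (1 - D1 ω) ∂μ :=
    key 1 hA1 hZ1 _ _ (fun p => p.1 * (1 - p.2.2.2)) (by fun_prop) (fun ω => rfl) hpt01
  -- the differences equal integrals over the complier set
  have hsub1 : (∫ ω, Y1 ω * D1 ω ∂μ) - (∫ ω, Y1 ω * D0 ω ∂μ) = ∫ ω in {ω | D0 ω < D1 ω}, Y1 ω ∂μ := by
    rw [← integral_sub hi11 hi10, ← integral_indicator hCOs]
    congr 1; funext ω
    rcases hD0bin ω with h0|h0 <;> rcases hD1bin ω with h1|h1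
    · norm_num [Set.indicator, Set.mem_setOf_eq, h0, h1]
    · norm_num [Set.indicator, Set.mem_setOf_eq, h0, h1]
    · exfalso; have := hmono ω; rw [h0, h1] at this; linarith
    · norm_num [Set.indicator, Set.mem_setOf_eq, h0, h1]
  have hsub0 : (∫ ω, Y0 ω * (1 - D0 ω) ∂μ) - (∫ ω, Y0 ω * (1 - D1 ω) ∂μ) = ∫ ω in {ω | D0 ω < D1 ω}, Y0 ω ∂μ := by
    rw [← integral_sub hi00 hi01, ← integral_indicator hCOs]
    congr 1; funext ω
    rcases hD0bin ω with h0|h0 <;> rcases hD1bin ω with h1|h1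
    · norm_num [Set.indicator, Set.mem_setOf_eq, h0, h1]
    · norm_num [Set.indicator, Set.mem_setOf_eq, h0, h1]
    · exfalso; have := hmono ω; rw [h0, h1] at this; linarith
    · norm_num [Set.indicator, Set.mem_setOf_eq, h0, h1]
  constructor
  · rw [condMean_mul μ _ _ hCO, e11, e10, hsub1]
  · rw [condMean_mul μ _ _ hCO, e00, e01, hsub0]
end

section
/- Under the binary IV model with independence Z ⫫ (Y(d), D(z)) | X, consistency, exclusion, and monotonicity D(1) ≥ D(0): P(D(1) > D(0) | X) = P(D=1 | Z=1, X) - P(D=1 | Z=0, X), and P(D(1)=D(0)=1 | X) = P(D=1 | Z=0, X), and P(D(1)=D(0)=0 | X) = P(D=0 | Z=1, X). -/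
open MeasureTheory ProbabilityTheory

/-- Conditional probability of `A` given `B`. -/
noncomputable def condProb {Ω : Type*} [MeasurableSpace Ω] (μ : Measure Ω)
    (A B : Set Ω) : ℝ :=
  (μ (A ∩ B)).toReal / (μ B).toReal

/-- Identification of the principal strata proportions (compliers, always-takers,
never-takers) from the observed conditional treatment probabilities, conditional on a
fixed value of `X`. -/
theorem stmt_16 {Ω : Type*} [MeasurableSpace Ω] (μ : Measure Ω) [IsProbabilityMeasure μ]
    (Z D D0 D1 : Ω → ℝ)
    (hZbin : ∀ ω, Z ω = 0 ∨ Z ω = 1)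
    (hD0bin : ∀ ω, D0 ω = 0 ∨ D0 ω = 1) (hD1bin : ∀ ω, D1 ω = 0 ∨ D1 ω = 1)
    (hZ : Measurable Z) (hD0 : Measurable D0) (hD1 : Measurable D1)
    (hindep : IndepFun Z (fun ω => (D0 ω, D1 ω)) μ)
    (hmono : ∀ ω, D0 ω ≤ D1 ω)
    (hD : ∀ ω, D ω = if Z ω = 1 then D1 ω else D0 ω)
    (hZ1 : 0 < μ {ω | Z ω = 1}) (hZ0 : 0 < μ {ω | Z ω = 0}) :
    (μ {ω | D0 ω < D1 ω}).toReal =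
      condProb μ {ω | D ω = 1} {ω | Z ω = 1} - condProb μ {ω | D ω = 1} {ω | Z ω = 0} ∧
    (μ {ω | D1 ω = 1 ∧ D0 ω = 1}).toReal = condProb μ {ω | D ω = 1} {ω | Z ω = 0} ∧
    (μ {ω | D1 ω = 0 ∧ D0 ω = 0}).toReal = condProb μ {ω | D ω = 0} {ω | Z ω = 1} := by
  have key := hindep.measure_inter_preimage_eq_mul
  -- cancellation helper
  have cancel : ∀ (x y : ENNReal), x ≠ 0 → x ≠ ⊤ → (x * y).toReal / x.toReal = y.toReal := by
    intro x y hx hx'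
    rw [ENNReal.toReal_mul]
    exact mul_div_cancel_left₀ _ (ENNReal.toReal_ne_zero.mpr ⟨hx, hx'⟩)
  have c1 : condProb μ {ω | D ω = 1} {ω | Z ω = 1} = (μ {ω | D1 ω = 1}).toReal := by
    have e : {ω | D ω = 1} ∩ {ω | Z ω = 1}
        = Z ⁻¹' {1} ∩ (fun ω => (D0 ω, D1 ω)) ⁻¹' {p : ℝ × ℝ | p.2 = 1} := by
      ext ω
      by_cases hz : Z ω = 1 <;> simp [hD ω, hz, and_comm]
    have e2 : (fun ω => (D0 ω, D1 ω)) ⁻¹' {p : ℝ × ℝ | p.2 = 1} = {ω | D1 ω = 1} := rfl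
    have e3 : Z ⁻¹' {1} = {ω | Z ω = 1} := rfl
    rw [condProb, e, key {1} {p : ℝ × ℝ | p.2 = 1} (measurableSet_singleton 1)
      ((measurableSet_singleton (1:ℝ)).preimage measurable_snd), e2, e3,
      cancel _ _ hZ1.ne' (measure_ne_top μ _)]
  have c0 : condProb μ {ω | D ω = 1} {ω | Z ω = 0} = (μ {ω | D0 ω = 1}).toReal := by
    have e : {ω | D ω = 1} ∩ {ω | Z ω = 0}
        = Z ⁻¹' {0} ∩ (fun ω => (D0 ω, D1 ω)) ⁻¹' {p : ℝ × ℝ | p.1 = 1} := by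
      ext ω
      rcases hZbin ω with hz | hz <;> simp [hD ω, hz, and_comm]
    have e2 : (fun ω => (D0 ω, D1 ω)) ⁻¹' {p : ℝ × ℝ | p.1 = 1} = {ω | D0 ω = 1} := rfl
    have e3 : Z ⁻¹' {0} = {ω | Z ω = 0} := rfl
    rw [condProb, e, key {0} {p : ℝ × ℝ | p.1 = 1} (measurableSet_singleton 0)
      ((measurableSet_singleton (1:ℝ)).preimage measurable_fst), e2, e3,
      cancel _ _ hZ0.ne' (measure_ne_top μ _)]
  have c2 : condProb μ {ω | D ω = 0} {ω | Z ω = 1} = (μ {ω | D1 ω = 0}).toReal := by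
    have e : {ω | D ω = 0} ∩ {ω | Z ω = 1}
        = Z ⁻¹' {1} ∩ (fun ω => (D0 ω, D1 ω)) ⁻¹' {p : ℝ × ℝ | p.2 = 0} := by
      ext ω
      by_cases hz : Z ω = 1 <;> simp [hD ω, hz, and_comm]
    have e2 : (fun ω => (D0 ω, D1 ω)) ⁻¹' {p : ℝ × ℝ | p.2 = 0} = {ω | D1 ω = 0} := rfl
    have e3 : Z ⁻¹' {1} = {ω | Z ω = 1} := rfl
    rw [condProb, e, key {1} {p : ℝ × ℝ | p.2 = 0} (measurableSet_singleton 1)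
      ((measurableSet_singleton (0:ℝ)).preimage measurable_snd), e2, e3,
      cancel _ _ hZ1.ne' (measure_ne_top μ _)]
  -- set identities
  have s1 : {ω | D1 ω = 1 ∧ D0 ω = 1} = {ω | D0 ω = 1} := by
    ext ω
    simp only [Set.mem_setOf_eq, and_iff_right_iff_imp]
    intro h
    rcases hD1bin ω with h1 | h1
    · exfalso; have := hmono ω; rw [h, h1] at this; linarith
    · exact h1
  have s2 : {ω | D1 ω = 0 ∧ D0 ω = 0} = {ω | D1 ω = 0} := by
    ext ω
    simp only [Set.mem_setOf_eq, and_iff_left_iff_imp]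
    intro h
    rcases hD0bin ω with h1 | h1
    · exact h1
    · exfalso; have := hmono ω; rw [h, h1] at this; linarith
  have s3 : {ω | D0 ω < D1 ω} = {ω | D1 ω = 1} \ {ω | D0 ω = 1} := by
    ext ω
    simp only [Set.mem_setOf_eq, Set.mem_diff]
    rcases hD0bin ω with h0 | h0 <;> rcases hD1bin ω with h1 | h1 <;>
      simp [h0, h1] <;> norm_num
  have hsub : {ω | D0 ω = 1} ⊆ {ω | D1 ω = 1} := by
    intro ω h
    rcases hD1bin ω with h1 | h1
    · exfalso; have := hmono ω; simp only [Set.mem_setOf_eq] at h; rw [h, h1] at this; linarith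
    · exact h1
  have hm0 : MeasurableSet {ω | D0 ω = 1} := hD0 (measurableSet_singleton 1)
  refine ⟨?_, ?_, ?_⟩
  · rw [c1, c0, s3, measure_diff hsub hm0.nullMeasurableSet (measure_ne_top μ _),
      ENNReal.toReal_sub_of_le (measure_mono hsub) (measure_ne_top μ _)]
  · rw [c0, s1]
  · rw [c2, s2]
end
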